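/- The quotients are 2-dimensional: equivalently, the restriction map gives the isomorphism J_b(ℚ_p) ≅ GSp(C). Precisely: the assignment g ↦ g|_C defines a group isomorphism from the group J = {g : N → N a K₀-linear bijection such that g(N₀) = N₀, g(N₁) = N₁, g∘Π = Π∘g, g∘F = F∘g, and there exists c ∈ K₀^× with (gx, gy) = c·(x, y) for all x, y ∈ N} onto the symplectic similitude group GSp(C, (·,·)₀) = {h : C → C a ℚ_p-linear bijection such that there exists c ∈ ℚ_p^× with (hx, hy)₀ = c·(x, y)₀ for all x, y ∈ C}. -/

import Mathlib

noncomputable section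

namespace QURZ

/-- The fixed subfield of a field automorphism (for `σ` the Frobenius of `K₀`, this
is `ℚ_p`). -/
def fixedSubfield {K : Type*} [Field K] (σ : K ≃+* K) : Subfield K :=
  { RingHom.eqLocus (σ : K →+* K) (RingHom.id K) with
    inv_mem' := fun x hx => by
      have h : σ x = x := hx
      show σ x⁻¹ = x⁻¹
      rw [map_inv₀, h] }

variable {K₀ : Type*} [Field K₀] {N : Type*} [AddCommGroup N] [Module K₀ N]

/-- `C = N₀^{τ=1}`: the vectors `x ∈ N₀` with `τ x = x`, i.e. `F x = Π x`
(where `τ = Π⁻¹ ∘ F`), as a vector space over the fixed field `ℚ_p` of `σ`. -/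
def tauFixed0 (σ : K₀ ≃+* K₀) (N₀ : Submodule K₀ N) (Pmap : N →ₗ[K₀] N)
    (F : N →ₛₗ[(σ : K₀ →+* K₀)] N) : Submodule ↥(fixedSubfield σ) N where
  carrier := {x | x ∈ N₀ ∧ F x = Pmap x}
  zero_mem' := ⟨N₀.zero_mem, by rw [map_zero, map_zero]⟩
  add_mem' := by
    intro a b ha hb
    exact ⟨N₀.add_mem ha.1 hb.1, by rw [map_add, map_add, ha.2, hb.2]⟩
  smul_mem' := by
    intro c x hx
    constructor
    · show (c : K₀) • x ∈ N₀
      exact N₀.smul_mem _ hx.1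
    · show F ((c : K₀) • x) = Pmap ((c : K₀) • x)
      rw [map_smulₛₗ, map_smul]
      show σ (c : K₀) • F x = (c : K₀) • Pmap x
      have hc : σ (c : K₀) = (c : K₀) := c.2
      rw [hc, hx.2]

/-- The group `J = J_b(ℚ_p)`: all `K₀`-linear bijections of `N` preserving `N₀` and
`N₁`, commuting with `Π` and `F`, and scaling the symplectic form by some
`c ∈ K₀ˣ`. -/
def Jgrp (σ : K₀ ≃+* K₀) (form : N →ₗ[K₀] N →ₗ[K₀] K₀) (N₀ N₁ : Submodule K₀ N)
    (Pmap : N →ₗ[K₀] N) (F : N →ₛₗ[(σ : K₀ →+* K₀)] N) :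
    Subgroup (N ≃ₗ[K₀] N) where
  carrier := {g | Submodule.map (g : N →ₗ[K₀] N) N₀ = N₀ ∧
    Submodule.map (g : N →ₗ[K₀] N) N₁ = N₁ ∧
    (∀ x, g (Pmap x) = Pmap (g x)) ∧
    (∀ x, g (F x) = F (g x)) ∧
    ∃ c : K₀, c ≠ 0 ∧ ∀ x y, form (g x) (g y) = c * form x y}
  one_mem' := by
    refine ⟨by simp, by simp, fun x => rfl, fun x => rfl, 1, one_ne_zero, fun x y => by simp⟩
  mul_mem' := by
    rintro a b ⟨ha0, ha1, haP, haF, ca, hca, haf⟩ ⟨hb0, hb1, hbP, hbF, cb, hcb, hbf⟩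
    have hab : ∀ x, (a * b) x = a (b x) := fun x => rfl
    have hcoe : ((a * b : N ≃ₗ[K₀] N) : N →ₗ[K₀] N)
        = (a : N →ₗ[K₀] N) ∘ₗ (b : N →ₗ[K₀] N) := by
      ext z; rfl
    refine ⟨?_, ?_, fun x => ?_, fun x => ?_, ca * cb, mul_ne_zero hca hcb, fun x y => ?_⟩
    · rw [hcoe, Submodule.map_comp, hb0, ha0]
    · rw [hcoe, Submodule.map_comp, hb1, ha1]
    · rw [hab, hab, hbP, haP]
    · rw [hab, hab, hbF, haF]
    · rw [hab, hab, haf, hbf, mul_assoc]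
  inv_mem' := by
    rintro a ⟨ha0, ha1, haP, haF, ca, hca, haf⟩
    have hcoe : ((a⁻¹ : N ≃ₗ[K₀] N) : N →ₗ[K₀] N) ∘ₗ (a : N →ₗ[K₀] N) = LinearMap.id := by
      ext z
      show a⁻¹ (a z) = z
      show (a⁻¹ * a) z = z
      rw [inv_mul_cancel]
      rfl
    have hinva : ∀ z, a⁻¹ (a z) = z := fun z => by
      show (a⁻¹ * a) z = z
      rw [inv_mul_cancel]
      rfl
    have hainv : ∀ z, a (a⁻¹ z) = z := fun z => by
      show (a * a⁻¹) z = z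
      rw [mul_inv_cancel]
      rfl
    refine ⟨?_, ?_, fun x => ?_, fun x => ?_, ca⁻¹, inv_ne_zero hca, fun x y => ?_⟩
    · conv_lhs => rw [← ha0]
      rw [← Submodule.map_comp, hcoe, Submodule.map_id]
    · conv_lhs => rw [← ha1]
      rw [← Submodule.map_comp, hcoe, Submodule.map_id]
    · have h2 := haP (a⁻¹ x)
      rw [hainv x] at h2
      calc a⁻¹ (Pmap x) = a⁻¹ (a (Pmap (a⁻¹ x))) := by rw [h2]
        _ = Pmap (a⁻¹ x) := hinva _
    · have h2 := haF (a⁻¹ x)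
      rw [hainv x] at h2
      calc a⁻¹ (F x) = a⁻¹ (a (F (a⁻¹ x))) := by rw [h2]
        _ = F (a⁻¹ x) := hinva _
    · have h := haf (a⁻¹ x) (a⁻¹ y)
      rw [hainv x, hainv y] at h
      rw [h, ← mul_assoc, inv_mul_cancel₀ hca, one_mul]

/-- The symplectic similitude group `GSp(C, (·,·)₀)` where `(x, y)₀ = (x, Π y)`:
all `ℚ_p`-linear bijections of `C` scaling the form `(·,·)₀` by some `c ∈ ℚ_pˣ`. -/
def GSpGrp (σ : K₀ ≃+* K₀) (form : N →ₗ[K₀] N →ₗ[K₀] K₀) (N₀ : Submodule K₀ N)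
    (Pmap : N →ₗ[K₀] N) (F : N →ₛₗ[(σ : K₀ →+* K₀)] N) :
    Subgroup (↥(tauFixed0 σ N₀ Pmap F) ≃ₗ[↥(fixedSubfield σ)] ↥(tauFixed0 σ N₀ Pmap F)) where
  carrier := {h | ∃ c : ↥(fixedSubfield σ), c ≠ 0 ∧
    ∀ x y : ↥(tauFixed0 σ N₀ Pmap F),
      form (h x : N) (Pmap (h y : N)) = (c : K₀) * form (x : N) (Pmap (y : N))}
  one_mem' := ⟨1, one_ne_zero, fun x y => by simp⟩
  mul_mem' := by
    rintro a b ⟨c, hc, hcf⟩ ⟨d, hd, hdf⟩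
    refine ⟨c * d, mul_ne_zero hc hd, fun x y => ?_⟩
    have hab : ∀ z, (a * b) z = a (b z) := fun z => rfl
    rw [hab, hab, hcf, hdf]
    push_cast
    ring
  inv_mem' := by
    rintro a ⟨c, hc, hcf⟩
    refine ⟨c⁻¹, inv_ne_zero hc, fun x y => ?_⟩
    have h := hcf (a⁻¹ x) (a⁻¹ y)
    have hx : a (a⁻¹ x) = x := by
      show (a * a⁻¹) x = x
      rw [mul_inv_cancel]
      rfl
    have hy : a (a⁻¹ y) = y := by
      show (a * a⁻¹) y = y
      rw [mul_inv_cancel]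
      rfl
    rw [hx, hy] at h
    rw [h, ← mul_assoc]
    have hcK : (c : K₀) ≠ 0 := fun h0 => hc (Subtype.ext h0)
    have hone : ((c⁻¹ : ↥(fixedSubfield σ)) : K₀) * (c : K₀) = 1 := by
      push_cast
      exact inv_mul_cancel₀ hcK
    rw [hone, one_mul]

set_option maxHeartbeats 2000000 in
set_option synthInstance.maxHeartbeats 1000000 in
/-- Restriction to `C = N₀^{τ=1}` defines a group isomorphism
`J_b(ℚ_p) ≅ GSp(C, (·,·)₀)`. -/
theorem statement_0
    (p : ℕ) (hp : Nat.Prime p) (hp_odd : p ≠ 2)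
    {W₀ : Type*} [CommRing W₀] [IsDomain W₀] [IsDiscreteValuationRing W₀]
    [Algebra W₀ K₀] [IsFractionRing W₀ K₀]
    (hp_irr : Irreducible (p : W₀))
    (σ : K₀ ≃+* K₀)
    (hσW : ∀ c : W₀, ∃ c' : W₀, algebraMap W₀ K₀ c' = σ (algebraMap W₀ K₀ c))
    (hdimN : Module.finrank K₀ N = 8)
    (N₀ N₁ : Submodule K₀ N) (hcompl : IsCompl N₀ N₁)
    (hdim0 : Module.finrank K₀ ↥N₀ = 4) (hdim1 : Module.finrank K₀ ↥N₁ = 4)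
    (form : N →ₗ[K₀] N →ₗ[K₀] K₀)
    (halt : ∀ x, form x x = 0)
    (hnondeg : ∀ x, (∀ y, form x y = 0) → x = 0)
    (hiso0 : ∀ x ∈ N₀, ∀ y ∈ N₀, form x y = 0)
    (hiso1 : ∀ x ∈ N₁, ∀ y ∈ N₁, form x y = 0)
    (F : N →ₛₗ[(σ : K₀ →+* K₀)] N)
    (hF_bij : Function.Bijective F)
    (hF01 : F '' (N₀ : Set N) = (N₁ : Set N))
    (hF10 : F '' (N₁ : Set N) = (N₀ : Set N))
    (hF_form : ∀ x y, form (F x) (F y) = (p : K₀) * σ (form x y))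
    (Pmap : N →ₗ[K₀] N)
    (hP_bij : Function.Bijective Pmap)
    (hPP : ∀ x, Pmap (Pmap x) = (p : K₀) • x)
    (hPF : ∀ x, Pmap (F x) = F (Pmap x))
    (hP_form : ∀ x y, form (Pmap x) y = form x (Pmap y))
    (hP01 : Pmap '' (N₀ : Set N) = (N₁ : Set N))
    (hP10 : Pmap '' (N₁ : Set N) = (N₀ : Set N))
    (hC_dim : Module.finrank ↥(fixedSubfield σ) ↥(tauFixed0 σ N₀ Pmap F) = 4)
    (hC_span :
      Submodule.span K₀ ((tauFixed0 σ N₀ Pmap F : Submodule ↥(fixedSubfield σ) N) : Set N)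
        = N₀) :
    ∃ Φ : ↥(Jgrp σ form N₀ N₁ Pmap F) ≃* ↥(GSpGrp σ form N₀ Pmap F),
      ∀ (g : ↥(Jgrp σ form N₀ N₁ Pmap F)) (x : N) (hx : x ∈ tauFixed0 σ N₀ Pmap F),
        (((Φ g : ↥(tauFixed0 σ N₀ Pmap F) ≃ₗ[↥(fixedSubfield σ)]
            ↥(tauFixed0 σ N₀ Pmap F)) ⟨x, hx⟩ : N)) = (g : N ≃ₗ[K₀] N) x := by
  classical
  -- basic nonvanishing facts
  have hpW : (p : W₀) ≠ 0 := hp_irr.ne_zero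
  have hpK : (p : K₀) ≠ 0 := by
    intro h
    apply hpW
    apply IsFractionRing.injective W₀ K₀
    rw [map_natCast, h, map_zero]
  haveI hNtriv : Nontrivial N :=
    Module.nontrivial_of_finrank_pos (R := K₀) (by rw [hdimN]; norm_num)
  obtain ⟨x₀, hx₀⟩ := exists_ne (0 : N)
  obtain ⟨xf, yf, hxyf⟩ : ∃ x y : N, form x y ≠ 0 := by
    by_contra hall
    push_neg at hall
    exact hx₀ (hnondeg x₀ fun y => hall x₀ y)
  -- scalar tower
  haveI hTower : IsScalarTower ↥(fixedSubfield σ) K₀ N :=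
    ⟨fun s k n => by
      show ((s : K₀) * k) • n = (s : K₀) • k • n
      rw [mul_smul]⟩
  -- the similitude factor of g ∈ J is σ-fixed
  have hJc : ∀ g : N ≃ₗ[K₀] N, g ∈ Jgrp σ form N₀ N₁ Pmap F →
      ∃ c : ↥(fixedSubfield σ), (c : K₀) ≠ 0 ∧
        ∀ x y, form (g x) (g y) = (c : K₀) * form x y := by
    rintro g ⟨-, -, hgP, hgF, c, hc, hgf⟩
    have hσf : σ (form xf yf) ≠ 0 := fun h => hxyf (by
      have := congrArg σ.symm h
      rwa [RingEquiv.symm_apply_apply, map_zero] at this)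
    have hfix : σ c = c := by
      have h1 : form (g (F xf)) (g (F yf)) = c * ((p : K₀) * σ (form xf yf)) := by
        rw [hgf, hF_form]
      have h2 : form (g (F xf)) (g (F yf)) = (p : K₀) * (σ c * σ (form xf yf)) := by
        rw [hgF, hgF, hF_form, hgf, map_mul]
      have h3 : σ c * ((p : K₀) * σ (form xf yf)) = c * ((p : K₀) * σ (form xf yf)) :=
        calc σ c * ((p : K₀) * σ (form xf yf)) = (p : K₀) * (σ c * σ (form xf yf)) := by ring
          _ = form (g (F xf)) (g (F yf)) := h2.symm
          _ = c * ((p : K₀) * σ (form xf yf)) := h1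
      exact mul_right_cancel₀ (mul_ne_zero hpK hσf) h3
    exact ⟨⟨c, hfix⟩, hc, hgf⟩
  -- J preserves C
  have hmemC : ∀ g : N ≃ₗ[K₀] N, g ∈ Jgrp σ form N₀ N₁ Pmap F →
      ∀ x : N, x ∈ tauFixed0 σ N₀ Pmap F → g x ∈ tauFixed0 σ N₀ Pmap F := by
    rintro g ⟨hg0, -, hgP, hgF, -⟩ x hx
    constructor
    · rw [← hg0]; exact ⟨x, hx.1, rfl⟩
    · rw [← hgF, hx.2, hgP]
  -- the restriction map
  have hmemC' : ∀ (g : ↥(Jgrp σ form N₀ N₁ Pmap F)) (x : ↥(tauFixed0 σ N₀ Pmap F)),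
      (g : N ≃ₗ[K₀] N) (x : N) ∈ tauFixed0 σ N₀ Pmap F :=
    fun g x => hmemC g.1 g.2 x.1 x.2
  let restr : ∀ _ : ↥(Jgrp σ form N₀ N₁ Pmap F),
      ↥(tauFixed0 σ N₀ Pmap F) ≃ₗ[↥(fixedSubfield σ)] ↥(tauFixed0 σ N₀ Pmap F) := fun g =>
    { toFun := fun x => ⟨(g : N ≃ₗ[K₀] N) x, hmemC' g x⟩
      invFun := fun x => ⟨((g⁻¹ : ↥(Jgrp σ form N₀ N₁ Pmap F)) : N ≃ₗ[K₀] N) x, hmemC' g⁻¹ x⟩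
      map_add' := fun x y => Subtype.ext (by
        show (g : N ≃ₗ[K₀] N) ((x : N) + y) = _
        rw [map_add]; rfl)
      map_smul' := fun c x => Subtype.ext (by
        show (g : N ≃ₗ[K₀] N) ((c : K₀) • (x : N)) = (c : K₀) • (g : N ≃ₗ[K₀] N) (x : N)
        rw [map_smul])
      left_inv := fun x => Subtype.ext (by
        show (((g⁻¹ * g : ↥(Jgrp σ form N₀ N₁ Pmap F)) : N ≃ₗ[K₀] N)) (x : N) = (x : N)
        rw [inv_mul_cancel]
        rfl)
      right_inv := fun x => Subtype.ext (by
        show (((g * g⁻¹ : ↥(Jgrp σ form N₀ N₁ Pmap F)) : N ≃ₗ[K₀] N)) (x : N) = (x : N)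
        rw [mul_inv_cancel]
        rfl) }
  have hrestr_mem : ∀ g : ↥(Jgrp σ form N₀ N₁ Pmap F),
      restr g ∈ GSpGrp σ form N₀ Pmap F := by
    intro g
    obtain ⟨c, hcK, hgf⟩ := hJc g.1 g.2
    obtain ⟨-, -, hgP, -, -⟩ := g.2
    refine ⟨c, fun h0 => hcK (by rw [h0]; rfl), fun x y => ?_⟩
    show form ((g : N ≃ₗ[K₀] N) x) (Pmap ((g : N ≃ₗ[K₀] N) y)) = _
    rw [← hgP, hgf]
  let π : ↥(Jgrp σ form N₀ N₁ Pmap F) →* ↥(GSpGrp σ form N₀ Pmap F) :=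
    { toFun := fun g => ⟨restr g, hrestr_mem g⟩
      map_one' := Subtype.ext (LinearEquiv.ext fun x => Subtype.ext rfl)
      map_mul' := fun a b => Subtype.ext (LinearEquiv.ext fun x => Subtype.ext rfl) }
  -- basis of C
  haveI hCfin : FiniteDimensional ↥(fixedSubfield σ) ↥(tauFixed0 σ N₀ Pmap F) :=
    FiniteDimensional.of_finrank_pos (by rw [hC_dim]; norm_num)
  haveI hCfree : Module.Free ↥(fixedSubfield σ) ↥(tauFixed0 σ N₀ Pmap F) :=
    Module.Free.of_divisionRing _ _
  obtain ⟨bC⟩ : Nonempty (Module.Basis (Fin 4) ↥(fixedSubfield σ) ↥(tauFixed0 σ N₀ Pmap F)) :=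
    ⟨Module.finBasisOfFinrankEq _ _ hC_dim⟩
  -- the K₀-span of the image of any ℚ_p-basis of C is N₀
  have hspan : ∀ b : Module.Basis (Fin 4) ↥(fixedSubfield σ) ↥(tauFixed0 σ N₀ Pmap F),
      Submodule.span K₀ (Set.range fun i => ((b i : N))) = N₀ := by
    intro b
    apply le_antisymm
    · rw [Submodule.span_le]
      rintro _ ⟨i, rfl⟩
      exact (b i).2.1
    · refine le_trans (le_of_eq hC_span.symm) (Submodule.span_le.mpr ?_)
      intro x hx
      have hx' : x ∈ tauFixed0 σ N₀ Pmap F := hx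
      have hrep : ((Finset.univ.sum fun i => b.repr ⟨x, hx'⟩ i • b i :
          ↥(tauFixed0 σ N₀ Pmap F)) : N) = x :=
        congrArg Subtype.val (Module.Basis.sum_repr b ⟨x, hx'⟩)
      have hsum : ((Finset.univ.sum fun i => b.repr ⟨x, hx'⟩ i • b i :
          ↥(tauFixed0 σ N₀ Pmap F)) : N) ∈
          Submodule.span K₀ (Set.range fun i => ((b i : N))) := by
        rw [Submodule.coe_sum]
        apply Submodule.sum_mem
        intro i _
        show ((b.repr ⟨x, hx'⟩ i : K₀) • ((b i : N))) ∈ _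
        exact Submodule.smul_mem _ _ (Submodule.subset_span ⟨i, rfl⟩)
      exact hrep ▸ hsum
  let e : Fin 4 → N := fun i => ((bC i : N))
  have heC : ∀ i, e i ∈ tauFixed0 σ N₀ Pmap F := fun i => (bC i).2
  have hspan_e : Submodule.span K₀ (Set.range e) = N₀ := hspan bC
  have hmapP0 : Submodule.map Pmap N₀ = N₁ :=
    SetLike.coe_injective (by rw [Submodule.map_coe, hP01])
  have hPmem : ∀ x ∈ N₀, Pmap x ∈ N₁ := fun x hx => by
    rw [← hmapP0]; exact ⟨x, hx, rfl⟩
  -- basis of N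
  let v0 : Fin 4 ⊕ Fin 4 → N := Sum.elim e (Pmap ∘ e)
  have hspan_v0 : ⊤ ≤ Submodule.span K₀ (Set.range v0) := by
    rw [show Set.range v0 = Set.range e ∪ Pmap '' Set.range e by
      rw [Set.Sum.elim_range, Set.range_comp]]
    rw [Submodule.span_union, hspan_e, ← Submodule.map_span, hspan_e, hmapP0,
      hcompl.sup_eq_top]
  have hcard : Fintype.card (Fin 4 ⊕ Fin 4) = Module.finrank K₀ N := by
    rw [hdimN]; simp
  obtain ⟨bN, hbN⟩ : ∃ bN : Module.Basis (Fin 4 ⊕ Fin 4) K₀ N, ∀ j, bN j = v0 j :=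
    ⟨basisOfTopLeSpanOfCardEqFinrank v0 hspan_v0 hcard,
      fun j => congrFun (coe_basisOfTopLeSpanOfCardEqFinrank v0 hspan_v0 hcard) j⟩
  have hbNl : ∀ i, bN (Sum.inl i) = e i := fun i => hbN (Sum.inl i)
  have hbNr : ∀ i, bN (Sum.inr i) = Pmap (e i) := fun i => hbN (Sum.inr i)
  -- injectivity
  have hinj : Function.Injective π := by
    intro a b hab
    have hC : ∀ x : ↥(tauFixed0 σ N₀ Pmap F),
        (a : N ≃ₗ[K₀] N) (x : N) = (b : N ≃ₗ[K₀] N) (x : N) := by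
      intro x
      have h1 : restr a x = restr b x := by
        have := congrArg Subtype.val hab
        rw [show (π a).1 = restr a from rfl] at this
        exact congrFun (congrArg (fun f => (DFunLike.coe f)) this) x
      exact congrArg Subtype.val h1
    obtain ⟨-, -, haP, -, -⟩ := a.2
    obtain ⟨-, -, hbP, -, -⟩ := b.2
    have : ((a : N ≃ₗ[K₀] N) : N →ₗ[K₀] N) = ((b : N ≃ₗ[K₀] N) : N →ₗ[K₀] N) := by
      apply Module.Basis.ext bN
      rintro (i | i)
      · rw [hbNl]; exact hC ⟨e i, heC i⟩
      · rw [hbNr]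
        show (a : N ≃ₗ[K₀] N) (Pmap (e i)) = (b : N ≃ₗ[K₀] N) (Pmap (e i))
        rw [haP, hbP, hC ⟨e i, heC i⟩]
    exact Subtype.ext (LinearEquiv.toLinearMap_injective this)
  -- surjectivity
  have hsurj : Function.Surjective π := by
    rintro ⟨h, hmem⟩
    obtain ⟨c, hc, hcf⟩ := hmem
    have hcK : (c : K₀) ≠ 0 := fun h0 => hc (Subtype.ext h0)
    -- build a K₀-linear extension of any ℚ_p-linear automorphism of C
    have build : ∀ h' : ↥(tauFixed0 σ N₀ Pmap F) ≃ₗ[↥(fixedSubfield σ)]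
        ↥(tauFixed0 σ N₀ Pmap F), ∃ gl : N →ₗ[K₀] N,
        (∀ x : ↥(tauFixed0 σ N₀ Pmap F), gl (x : N) = ((h' x : N))) ∧
        (∀ x, gl (Pmap x) = Pmap (gl x)) := by
      intro h'
      set we : Fin 4 → N := fun i => ((h' (bC i) : N)) with hwe
      set gl : N →ₗ[K₀] N := Module.Basis.constr bN ℕ (Sum.elim we (Pmap ∘ we)) with hgldef
      have hgl : ∀ j, gl (bN j) = Sum.elim we (Pmap ∘ we) j := fun j =>
        Module.Basis.constr_basis bN ℕ _ j
      have hgl_e : ∀ i, gl (e i) = we i := fun i => by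
        rw [← hbNl]; exact hgl (Sum.inl i)
      have hgl_Pe : ∀ i, gl (Pmap (e i)) = Pmap (we i) := fun i => by
        rw [← hbNr]; exact hgl (Sum.inr i)
      have hglP : ∀ x, gl (Pmap x) = Pmap (gl x) := by
        have hcomp : gl ∘ₗ Pmap = Pmap ∘ₗ gl := by
          apply Module.Basis.ext bN
          rintro (i | i)
          · show gl (Pmap (bN (Sum.inl i))) = Pmap (gl (bN (Sum.inl i)))
            rw [hbNl, hgl_Pe, hgl_e]
          · show gl (Pmap (bN (Sum.inr i))) = Pmap (gl (bN (Sum.inr i)))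
            rw [hbNr, hPP, LinearMap.map_smul, hgl_e, hgl_Pe, hPP]
        exact fun x => congrFun (congrArg DFunLike.coe hcomp) x
      refine ⟨gl, ?_, hglP⟩
      -- agreement on C
      have hQlin : (LinearMap.restrictScalars ↥(fixedSubfield σ) gl).comp
          ((tauFixed0 σ N₀ Pmap F).subtype) =
          ((tauFixed0 σ N₀ Pmap F).subtype).comp (h' : ↥(tauFixed0 σ N₀ Pmap F) →ₗ[↥(fixedSubfield σ)] ↥(tauFixed0 σ N₀ Pmap F)) := by
        apply Module.Basis.ext bC
        intro i
        show gl ((bC i : N)) = ((h' (bC i) : N))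
        rw [show ((bC i : N)) = e i from rfl, hgl_e]
      exact fun x => congrFun (congrArg DFunLike.coe hQlin) x
    obtain ⟨gl, hglC, hglP⟩ := build h
    obtain ⟨gl', hglC', hglP'⟩ := build h⁻¹
    have hhinv : ∀ x, h (h⁻¹ x) = x := fun x => by
      show (h * h⁻¹) x = x
      rw [mul_inv_cancel]; rfl
    have hinvh : ∀ x, h⁻¹ (h x) = x := fun x => by
      show (h⁻¹ * h) x = x
      rw [inv_mul_cancel]; rfl
    -- gl and gl' are mutually inverse
    have hgg'_e : ∀ i, gl (gl' (e i)) = e i := fun i => by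
      rw [show e i = ((bC i : N)) from rfl, hglC' (bC i), hglC (h⁻¹ (bC i)), hhinv]
    have hg'g_e : ∀ i, gl' (gl (e i)) = e i := fun i => by
      rw [show e i = ((bC i : N)) from rfl, hglC (bC i), hglC' (h (bC i)), hinvh]
    have hcomp1 : gl ∘ₗ gl' = LinearMap.id := by
      apply Module.Basis.ext bN
      rintro (i | i)
      · show gl (gl' (bN (Sum.inl i))) = bN (Sum.inl i)
        rw [hbNl, hgg'_e]
      · show gl (gl' (bN (Sum.inr i))) = bN (Sum.inr i)
        rw [hbNr, hglP', hglP, hgg'_e]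
    have hcomp2 : gl' ∘ₗ gl = LinearMap.id := by
      apply Module.Basis.ext bN
      rintro (i | i)
      · show gl' (gl (bN (Sum.inl i))) = bN (Sum.inl i)
        rw [hbNl, hg'g_e]
      · show gl' (gl (bN (Sum.inr i))) = bN (Sum.inr i)
        rw [hbNr, hglP, hglP', hg'g_e]
    let g : N ≃ₗ[K₀] N := LinearEquiv.ofLinear gl gl' hcomp1 hcomp2
    have hgcoe : ((g : N ≃ₗ[K₀] N) : N →ₗ[K₀] N) = gl := rfl
    -- the image of C under h, as a basis, and membership facts
    have hweC : ∀ x : ↥(tauFixed0 σ N₀ Pmap F), gl (x : N) ∈ tauFixed0 σ N₀ Pmap F :=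
      fun x => by rw [hglC]; exact (h x).2
    -- g maps N₀ to N₀
    have hmap0 : Submodule.map gl N₀ = N₀ := by
      rw [← hspan_e, Submodule.map_span, ← Set.range_comp]
      have hre : (gl ∘ e) = fun i => (((bC.map h) i : N)) := by
        funext i
        show gl ((bC i : N)) = _
        rw [hglC (bC i), Module.Basis.map_apply]
      rw [hre, hspan (bC.map h), hspan_e]
    have hmap1 : Submodule.map gl N₁ = N₁ := by
      have hcP : gl ∘ₗ Pmap = Pmap ∘ₗ gl := LinearMap.ext hglP
      rw [← hmapP0, ← Submodule.map_comp, hcP, Submodule.map_comp, hmap0]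
    -- g commutes with F
    have hglF : ∀ x, gl (F x) = F (gl x) := by
      have hcomp : (gl.comp F : N →ₛₗ[(σ : K₀ →+* K₀)] N) = (F.comp gl : N →ₛₗ[(σ : K₀ →+* K₀)] N) := by
        apply Module.Basis.ext bN
        rintro (i | i)
        · show gl (F (bN (Sum.inl i))) = F (gl (bN (Sum.inl i)))
          rw [hbNl]
          have h1 : F (e i) = Pmap (e i) := (heC i).2
          have h2 : F (gl (e i)) = Pmap (gl (e i)) := by
            have := hweC ⟨e i, heC i⟩
            exact this.2
          rw [h1, h2, hglP]
        · show gl (F (bN (Sum.inr i))) = F (gl (bN (Sum.inr i)))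
          rw [hbNr]
          have h1 : F (Pmap (e i)) = Pmap (Pmap (e i)) := by
            rw [← hPF, (heC i).2]
          have h2 : F (gl (Pmap (e i))) = Pmap (Pmap (gl (e i))) := by
            rw [hglP, ← hPF]
            have := (hweC ⟨e i, heC i⟩).2
            rw [this]
          rw [h1, h2, hPP, LinearMap.map_smul, hPP]
      exact fun x => congrFun (congrArg DFunLike.coe hcomp) x
    -- similitude
    have hsim : ∀ x y, form (gl x) (gl y) = (c : K₀) * form x y := by
      have hB : form.compl₁₂ gl gl = (c : K₀) • form := by
        apply LinearMap.ext_basis bN bN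
        rintro (i | i) (j | j) <;>
          simp only [LinearMap.compl₁₂_apply, LinearMap.smul_apply, smul_eq_mul] <;>
          rw [hbN, hbN]
        · show form (gl (e i)) (gl (e j)) = (c : K₀) * form (e i) (e j)
          rw [hiso0 _ (hweC ⟨e i, heC i⟩).1 _ (hweC ⟨e j, heC j⟩).1,
            hiso0 _ (heC i).1 _ (heC j).1, mul_zero]
        · show form (gl (e i)) (gl (Pmap (e j))) = (c : K₀) * form (e i) (Pmap (e j))
          rw [hglP]
          have := hcf (bC i) (bC j)
          rw [show ((bC i : N)) = e i from rfl] at this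
          rw [show gl (e i) = ((h (bC i) : N)) from hglC (bC i),
            show gl (e j) = ((h (bC j) : N)) from hglC (bC j)]
          exact this
        · show form (gl (Pmap (e i))) (gl (e j)) = (c : K₀) * form (Pmap (e i)) (e j)
          rw [hglP, hP_form, hP_form]
          have := hcf (bC i) (bC j)
          rw [show gl (e i) = ((h (bC i) : N)) from hglC (bC i),
            show gl (e j) = ((h (bC j) : N)) from hglC (bC j)]
          exact this
        · show form (gl (Pmap (e i))) (gl (Pmap (e j))) = (c : K₀) * form (Pmap (e i)) (Pmap (e j))
          rw [hglP, hglP,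
            hiso1 _ (hPmem _ (hweC ⟨e i, heC i⟩).1) _ (hPmem _ (hweC ⟨e j, heC j⟩).1),
            hiso1 _ (hPmem _ (heC i).1) _ (hPmem _ (heC j).1), mul_zero]
      intro x y
      have := congrFun (congrArg DFunLike.coe (congrFun (congrArg DFunLike.coe hB) x)) y
      simpa using this
    have hgmem : g ∈ Jgrp σ form N₀ N₁ Pmap F := by
      refine ⟨?_, ?_, hglP, hglF, (c : K₀), hcK, hsim⟩
      · rw [hgcoe]; exact hmap0
      · rw [hgcoe]; exact hmap1
    refine ⟨⟨g, hgmem⟩, ?_⟩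
    apply Subtype.ext
    show restr ⟨g, hgmem⟩ = h
    apply LinearEquiv.ext
    intro x
    apply Subtype.ext
    show gl (x : N) = ((h x : N))
    exact hglC x
  refine ⟨MulEquiv.ofBijective π ⟨hinj, hsurj⟩, fun g x hx => rfl⟩

end QURZ
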